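/- Suppose the newborn submatrix N̄ is irreducible (for every i,j there exists a power t with (N̄^t)_{ij} > 0) and ζ ∈ ℝ^n is a nonnegative vector with ∑_i ζ_i = 1 satisfying N̄ ζ = R₀ ζ. Define ξ ∈ ℝ^{mn} by ξ_{(1,i)} = ζ_i for all i and ξ_{(k,i)} = 0 for k ≠ 1. Then ξ is a nonnegative right eigenvector of N for the eigenvalue R₀, i.e. N ξ = R₀ ξ, and in particular ‖N ξ‖ = R₀. -/

import Mathlib

open Matrix BigOperators

/-- Spectral radius of a real square matrix: the maximum modulus of its complex
eigenvalues (elements of the spectrum of the matrix viewed over `ℂ`). -/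
noncomputable def specRad {ι : Type*} [Fintype ι] [DecidableEq ι]
    (M : Matrix ι ι ℝ) : ℝ :=
  sSup {r : ℝ | ∃ μ : ℂ, μ ∈ spectrum ℂ (M.map Complex.ofReal) ∧ r = ‖μ‖}

/-- The induced `L¹` operator norm of a real matrix: the maximum absolute column sum. -/
noncomputable def colNorm {ι : Type*} [Fintype ι] (M : Matrix ι ι ℝ) : ℝ :=
  ⨆ q, ∑ p, |M p q|

/-- Local fecundity matrix: first row `(f 0, …, f (m-1))`, other rows zero. -/
def localF (m : ℕ) (f : Fin m → ℝ) : Matrix (Fin m) (Fin m) ℝ :=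
  Matrix.of fun k' k => if (k' : ℕ) = 0 then f k else 0

/-- Local survival matrix: diagonal entries `sd k`, subdiagonal entries `ss k`,
all other entries zero. -/
def localS (m : ℕ) (sd ss : Fin m → ℝ) : Matrix (Fin m) (Fin m) ℝ :=
  Matrix.of fun k' k =>
    if k' = k then sd k else if (k' : ℕ) = (k : ℕ) + 1 then ss k else 0

/-- Global (block-diagonal) fecundity matrix `F = ⊕ᵢ Fⁱ`, indexed by
(stage, patch) pairs. -/
def fecMat (m n : ℕ) (f : Fin m → Fin n → ℝ) :
    Matrix (Fin m × Fin n) (Fin m × Fin n) ℝ :=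
  Matrix.of fun p q =>
    if p.2 = q.2 then localF m (fun k => f k q.2) p.1 q.1 else 0

/-- Global (block-diagonal) survival matrix `S = ⊕ᵢ Sⁱ`. -/
def survMat (m n : ℕ) (sd ss : Fin m → Fin n → ℝ) :
    Matrix (Fin m × Fin n) (Fin m × Fin n) ℝ :=
  Matrix.of fun p q =>
    if p.2 = q.2 then localS m (fun k => sd k q.2) (fun k => ss k q.2) p.1 q.1 else 0

/-- Global dispersion matrix: the `(i,j)` patch block is `diag (d 0 i j, …, d (m-1) i j)`. -/
def dispMat (m n : ℕ) (d : Fin m → Fin n → Fin n → ℝ) :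
    Matrix (Fin m × Fin n) (Fin m × Fin n) ℝ :=
  Matrix.of fun p q => if p.1 = q.1 then d q.1 p.2 q.2 else 0

/-- Next-generation matrix `N = D F (I - D S)⁻¹`. -/
noncomputable def nextGen (m n : ℕ) (f : Fin m → Fin n → ℝ)
    (sd ss : Fin m → Fin n → ℝ) (d : Fin m → Fin n → Fin n → ℝ) :
    Matrix (Fin m × Fin n) (Fin m × Fin n) ℝ :=
  dispMat m n d * fecMat m n f * (1 - dispMat m n d * survMat m n sd ss)⁻¹

/-- Partial next-generation matrix `W = F (I - D S)⁻¹`. -/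
noncomputable def partGen (m n : ℕ) (f : Fin m → Fin n → ℝ)
    (sd ss : Fin m → Fin n → ℝ) (d : Fin m → Fin n → Fin n → ℝ) :
    Matrix (Fin m × Fin n) (Fin m × Fin n) ℝ :=
  fecMat m n f * (1 - dispMat m n d * survMat m n sd ss)⁻¹

/-- Newborn submatrix: keep only the rows and columns with stage index `0`
(the newborn indices). -/
def newbornSub {m n : ℕ} (hm : 0 < m)
    (B : Matrix (Fin m × Fin n) (Fin m × Fin n) ℝ) : Matrix (Fin n) (Fin n) ℝ :=
  Matrix.of fun i j => B (⟨0, hm⟩, i) (⟨0, hm⟩, j)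

/-- The alternative net reproductive number `R̂₀ = max_{x ∈ 𝒳} ‖N x‖`, where `𝒳`
is the set of nonnegative `L¹`-unit vectors supported on the newborn indices. -/
noncomputable def altR0 (m n : ℕ)
    (N : Matrix (Fin m × Fin n) (Fin m × Fin n) ℝ) : ℝ :=
  sSup {r : ℝ | ∃ x : Fin m × Fin n → ℝ, (∀ p, 0 ≤ x p) ∧ (∑ p, |x p|) = 1 ∧
    (∀ p : Fin m × Fin n, (p.1 : ℕ) ≠ 0 → x p = 0) ∧ r = ∑ p, |N.mulVec x p|}


lemma specRad_nonneg {ι : Type*} [Fintype ι] [DecidableEq ι] [Nonempty ι]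
    (M : Matrix ι ι ℝ) : 0 ≤ specRad M := by
  have hne : (spectrum ℂ (M.map Complex.ofReal)).Nonempty :=
    spectrum.nonempty_of_isAlgClosed_of_finiteDimensional ℂ _
  obtain ⟨μ, hμ⟩ := hne
  have hfin : Set.Finite {r : ℝ | ∃ μ : ℂ, μ ∈ spectrum ℂ (M.map Complex.ofReal) ∧ r = ‖μ‖} := by
    have := (Matrix.finite_spectrum (M.map Complex.ofReal)).image (fun μ : ℂ => ‖μ‖)
    apply this.subset
    rintro r ⟨ν, hν, rfl⟩
    exact ⟨ν, hν, rfl⟩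
  exact le_trans (norm_nonneg μ) (le_csSup hfin.bddAbove ⟨μ, hμ, rfl⟩)

lemma nextGen_row_zero (m n : ℕ) (f : Fin m → Fin n → ℝ)
    (sd ss : Fin m → Fin n → ℝ) (d : Fin m → Fin n → Fin n → ℝ)
    (p q : Fin m × Fin n) (hp : (p.1 : ℕ) ≠ 0) :
    nextGen m n f sd ss d p q = 0 := by
  rw [nextGen, Matrix.mul_apply]
  apply Finset.sum_eq_zero
  intro r _
  have h0 : (dispMat m n d * fecMat m n f) p r = 0 := by
    rw [Matrix.mul_apply]
    apply Finset.sum_eq_zero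
    intro s _
    simp only [dispMat, fecMat, localF, Matrix.of_apply]
    by_cases h1 : p.1 = s.1
    · have : (s.1 : ℕ) ≠ 0 := h1 ▸ hp
      simp [this]
    · simp [h1]
  rw [h0, zero_mul]

theorem stmt8
    (m n : ℕ) (hm : 2 ≤ m) (hn : 1 ≤ n)
    (f : Fin m → Fin n → ℝ) (hf : ∀ k i, 0 ≤ f k i)
    (sd ss : Fin m → Fin n → ℝ)
    (hsd : ∀ k i, 0 ≤ sd k i) (hss : ∀ k i, 0 ≤ ss k i)
    (hs1 : ∀ (k : Fin m) (i : Fin n),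
      sd k i + (if (k : ℕ) + 1 < m then ss k i else 0) < 1)
    (d : Fin m → Fin n → Fin n → ℝ)
    (hd0 : ∀ k i j, 0 ≤ d k i j) (hd1 : ∀ k i j, d k i j ≤ 1)
    (hdsum : ∀ k j, ∑ i, d k i j = 1)
    (hirr : ∀ i j : Fin n, ∃ t : ℕ,
      0 < ((newbornSub (show 0 < m by omega) (nextGen m n f sd ss d)) ^ t) i j)
    (ζ : Fin n → ℝ) (hζ0 : ∀ i, 0 ≤ ζ i) (hζ1 : ∑ i, ζ i = 1)
    (hζeig : (newbornSub (show 0 < m by omega) (nextGen m n f sd ss d)).mulVec ζ =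
      specRad (nextGen m n f sd ss d) • ζ) :
    (∀ p : Fin m × Fin n,
        0 ≤ (fun p : Fin m × Fin n => if (p.1 : ℕ) = 0 then ζ p.2 else 0) p) ∧
      (nextGen m n f sd ss d).mulVec
          (fun p : Fin m × Fin n => if (p.1 : ℕ) = 0 then ζ p.2 else 0) =
        specRad (nextGen m n f sd ss d) •
          (fun p : Fin m × Fin n => if (p.1 : ℕ) = 0 then ζ p.2 else 0) ∧
      (∑ p, |(nextGen m n f sd ss d).mulVec
          (fun p : Fin m × Fin n => if (p.1 : ℕ) = 0 then ζ p.2 else 0) p|) =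
        specRad (nextGen m n f sd ss d)  := by
  have hm0 : 0 < m := by omega
  haveI : Nonempty (Fin m × Fin n) := ⟨(⟨0, hm0⟩, ⟨0, by omega⟩)⟩
  set N := nextGen m n f sd ss d with hN
  set R := specRad N with hR
  have hR0 : 0 ≤ R := specRad_nonneg N
  set ξ : Fin m × Fin n → ℝ := fun p => if (p.1 : ℕ) = 0 then ζ p.2 else 0 with hξ
  have hξ0 : ∀ p, 0 ≤ ξ p := by
    intro p; simp only [hξ]; split
    · exact hζ0 _
    · exact le_refl 0
  have key : N.mulVec ξ = R • ξ := by
    funext p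
    by_cases hp : (p.1 : ℕ) = 0
    · have hp1 : p.1 = ⟨0, hm0⟩ := Fin.ext hp
      have hpp : p = (⟨0, hm0⟩, p.2) := Prod.ext hp1 rfl
      have hlhs : N.mulVec ξ p = (newbornSub hm0 N).mulVec ζ p.2 := by
        rw [Matrix.mulVec, dotProduct, Fintype.sum_prod_type]
        have step : ∀ k : Fin m, (∑ j, N p (k, j) * ξ (k, j)) =
            if k = ⟨0, hm0⟩ then ∑ j, N p (k, j) * ζ j else 0 := by
          intro k
          by_cases hk : k = (⟨0, hm0⟩ : Fin m)
          · simp [hξ, hk]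
          · have hk' : (k : ℕ) ≠ 0 := fun h => hk (Fin.ext h)
            simp [hξ, hk', hk]
        simp only [step, Finset.sum_ite_eq', Finset.mem_univ, if_true]
        rw [Matrix.mulVec, dotProduct]
        apply Finset.sum_congr rfl
        intro j _
        rw [hpp]
        rfl
      have h2 : (newbornSub hm0 N).mulVec ζ p.2 = R * ζ p.2 := by
        have h3 := congrFun hζeig p.2
        simpa using h3
      rw [hlhs, h2]
      simp only [Pi.smul_apply, smul_eq_mul, hξ, if_pos hp]
    · have hlhs : N.mulVec ξ p = 0 := by
        rw [Matrix.mulVec, dotProduct]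
        apply Finset.sum_eq_zero
        intro q _
        rw [hN, nextGen_row_zero m n f sd ss d p q hp, zero_mul]
      rw [hlhs]
      simp only [Pi.smul_apply, hξ, if_neg hp, smul_eq_mul, mul_zero]
  refine ⟨hξ0, key, ?_⟩
  rw [key]
  have habs : ∀ p, |(R • ξ) p| = R * ξ p := by
    intro p
    rw [Pi.smul_apply, smul_eq_mul, abs_mul, abs_of_nonneg hR0, abs_of_nonneg (hξ0 p)]
  simp only [habs]
  rw [← Finset.mul_sum]
  have hsum : ∑ p, ξ p = 1 := by
    rw [Fintype.sum_prod_type]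
    have : ∀ k : Fin m, (∑ j, ξ (k, j)) = if k = ⟨0, hm0⟩ then 1 else 0 := by
      intro k
      by_cases hk : k = (⟨0, hm0⟩ : Fin m)
      · simp only [hξ, hk, if_pos rfl]
        simpa using hζ1
      · have : (k : ℕ) ≠ 0 := fun h => hk (Fin.ext h)
        simp [hξ, this, hk]
    simp only [this]
    simp
  rw [hsum, mul_one]
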